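/- arXiv:2205.02620 — 3 statements merged into one kernel-verified Lean document; each statement's English description precedes it below -/
import Mathlib

section
/- Any optimal bandwidth allocation W_s* for the semantic stream in the OMA bit-rate maximization problem satisfies W^low ≤ W_s* ≤ W^up, where W^low = S̄·K·L/I and W^up = min(S̄·K·L/(ε̄·I), W). (Lemma 1 of the paper.) -/
lemma key_log (a t1 t2 : ℝ) (ha : 0 < a) (ht1 : 0 < t1) (h12 : t1 < t2) :
    t1 * Real.log (1 + a / t1) < t2 * Real.log (1 + a / t2) := by
  have ht2 : 0 < t2 := ht1.trans h12
  have hw1 : 0 < t1 / t2 := by positivity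
  have hlt : t1 / t2 < 1 := (div_lt_one ht2).mpr h12
  have hw2 : 0 < 1 - t1 / t2 := by linarith
  have hx : (1 : ℝ) + a / t1 ∈ Set.Ioi (0 : ℝ) := by
    have : 0 < a / t1 := by positivity
    simp [Set.mem_Ioi]; linarith
  have hy : (1 : ℝ) ∈ Set.Ioi (0 : ℝ) := by simp
  have hne : (1 : ℝ) + a / t1 ≠ 1 := by
    have : 0 < a / t1 := by positivity
    intro h; linarith [h]
  have hcc := strictConcaveOn_log_Ioi.2 hx hy hne hw1 hw2 (by ring)
  simp only [smul_eq_mul, Real.log_one, mul_one, mul_zero, add_zero] at hcc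
  have harg : t1 / t2 * (1 + a / t1) + (1 - t1 / t2) = 1 + a / t2 := by
    field_simp
    ring
  rw [harg] at hcc
  have : t1 * Real.log (1 + a / t1) = t2 * (t1 / t2 * Real.log (1 + a / t1)) := by
    field_simp
  rw [this]
  exact mul_lt_mul_of_pos_left hcc ht2

lemma key_logb (a t1 t2 : ℝ) (ha : 0 < a) (ht1 : 0 < t1) (h12 : t1 < t2) :
    t1 * Real.logb 2 (1 + a / t1) < t2 * Real.logb 2 (1 + a / t2) := by
  have h := key_log a t1 t2 ha ht1 h12
  have hl2 : 0 < Real.log 2 := Real.log_pos one_lt_two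
  rw [Real.logb, Real.logb, ← mul_div_assoc, ← mul_div_assoc]
  exact (div_lt_div_iff_of_pos_right hl2).mpr h

theorem oma_optimal_bandwidth_bounds (W P I K L hs hb N0 Sbar εbar : ℝ)
    (hW : 0 < W) (hP : 0 < P) (hI : 0 < I) (hK : 0 < K) (hL : 0 < L)
    (hhs : 0 < hs) (hhb : 0 < hb) (hN0 : 0 < N0)
    (hSb : 0 < Sbar) (hεb : 0 < εbar) (hεb1 : εbar ≤ 1)
    (ε : ℝ → ℝ) (hmono : StrictMono ε) (hcont : Continuous ε)
    (hbd : ∀ x, 0 ≤ ε x ∧ ε x ≤ 1)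
    (hSmax : Sbar ≤ W * I / (K * L) * ε (P * hs / (W * N0)))
    (feasible : ℝ → ℝ → Prop)
    (hfeas : ∀ Ws ps, feasible Ws ps ↔
      0 ≤ Ws ∧ Ws ≤ W ∧ 0 ≤ ps ∧ ps ≤ P ∧
      Ws * I / (K * L) * ε (ps * hs / (Ws * N0)) ≥ Sbar ∧
      ε (ps * hs / (Ws * N0)) ≥ εbar)
    (obj : ℝ → ℝ → ℝ)
    (hobj : ∀ Ws ps, obj Ws ps =
      (W - Ws) * Real.logb 2 (1 + (P - ps) * hb / ((W - Ws) * N0)))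
    (Wsopt psopt : ℝ)
    (hopt : feasible Wsopt psopt ∧ ∀ Ws ps, feasible Ws ps → obj Ws ps ≤ obj Wsopt psopt) :
    Sbar * K * L / I ≤ Wsopt ∧ Wsopt ≤ min (Sbar * K * L / (εbar * I)) W := by
  obtain ⟨hfopt, hmax⟩ := hopt
  rw [hfeas] at hfopt
  obtain ⟨hWs0, hWsW, hps0, hpsP, hrate, hsim⟩ := hfopt
  set U : ℝ := Sbar * K * L / (εbar * I) with hUdef
  have hU0 : 0 < U := by positivity
  -- lower bound
  have hεle : ε (psopt * hs / (Wsopt * N0)) ≤ 1 := (hbd _).2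
  have hεge0 : 0 ≤ ε (psopt * hs / (Wsopt * N0)) := (hbd _).1
  have hfrac0 : 0 ≤ Wsopt * I / (K * L) := by positivity
  have h1 : Sbar ≤ Wsopt * I / (K * L) := by
    calc Sbar ≤ Wsopt * I / (K * L) * ε (psopt * hs / (Wsopt * N0)) := hrate
    _ ≤ Wsopt * I / (K * L) * 1 := by
        exact mul_le_mul_of_nonneg_left hεle hfrac0
    _ = Wsopt * I / (K * L) := mul_one _
  have hlow : Sbar * K * L / I ≤ Wsopt := by
    rw [div_le_iff₀ hI]
    have := (le_div_iff₀ (by positivity : (0:ℝ) < K * L)).mp h1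
    nlinarith
  -- Wsopt > 0
  have hWspos : 0 < Wsopt := by
    have : 0 < Sbar * K * L / I := by positivity
    linarith
  refine ⟨hlow, le_min ?_ hWsW⟩
  -- upper bound: by contradiction
  by_contra hcon
  push_neg at hcon
  have hUW : U < W := lt_of_lt_of_le hcon hWsW
  have hUI : U * I / (K * L) = Sbar / εbar := by
    rw [hUdef]; field_simp
  -- feasibility of (U, ps) whenever ε (ps*hs/(U*N0)) ≥ εbar and 0 ≤ ps ≤ P
  have hfeasU : ∀ ps, 0 ≤ ps → ps ≤ P → εbar ≤ ε (ps * hs / (U * N0)) → feasible U ps := by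
    intro ps h0 hp hε
    rw [hfeas]
    refine ⟨le_of_lt hU0, le_of_lt hUW, h0, hp, ?_, hε⟩
    rw [hUI]
    rw [ge_iff_le, ← div_le_iff₀' (by positivity : (0:ℝ) < Sbar / εbar)] at *
    calc Sbar / (Sbar / εbar) = εbar := by field_simp
    _ ≤ ε (ps * hs / (U * N0)) := hε
  -- case split on ε (P*hs/(U*N0)) vs εbar
  rcases le_or_gt (ε (P * hs / (U * N0))) εbar with hle | hgt
  · -- infeasibility of the optimum: argument comparison
    have harg : P * hs / (U * N0) ≤ psopt * hs / (Wsopt * N0) := by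
      by_contra hc
      push_neg at hc
      have := hmono hc
      have : ε (psopt * hs / (Wsopt * N0)) < εbar := lt_of_lt_of_le this hle
      linarith [hsim]
    rw [div_le_div_iff₀ (by positivity) (by positivity)] at harg
    have hh : 0 < P * hs * N0 := by positivity
    nlinarith [harg, mul_le_mul_of_nonneg_right hpsP
      (show (0:ℝ) ≤ hs * (U * N0) by positivity),
      mul_lt_mul_of_pos_left hcon hh]
  · -- ε (P*hs/(U*N0)) > εbar
    have hεmonoW : ε (psopt * hs / (Wsopt * N0)) ≤ ε (psopt * hs / (U * N0)) := by
      apply hmono.monotone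
      apply div_le_div_of_nonneg_left (by positivity) (by positivity)
      nlinarith
    rcases lt_or_eq_of_le hpsP with hplt | hpeq
    · -- psopt < P : strict objective increase from (Wsopt,psopt) to (U,psopt)
      have hfU : feasible U psopt := hfeasU psopt hps0 hpsP (le_trans hsim hεmonoW)
      have hle2 := hmax U psopt hfU
      rw [hobj, hobj] at hle2
      set a : ℝ := (P - psopt) * hb / N0 with hadef
      have ha : 0 < a := by
        have : 0 < P - psopt := by linarith
        positivity
      have hrw : ∀ t : ℝ, (P - psopt) * hb / (t * N0) = a / t := by
        intro t
        rw [hadef, div_div, mul_comm N0 t]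
      rw [hrw, hrw] at hle2
      rcases lt_or_eq_of_le hWsW with hWlt | hWeq
      · have := key_logb a (W - Wsopt) (W - U) ha (by linarith) (by linarith)
        linarith
      · rw [hWeq] at hle2
        simp only [sub_self, zero_mul] at hle2
        have hpos : 0 < (W - U) * Real.logb 2 (1 + a / (W - U)) := by
          apply mul_pos (by linarith)
          apply Real.logb_pos one_lt_two
          have : 0 < a / (W - U) := div_pos ha (by linarith)
          linarith
        linarith
    · -- psopt = P : objective at opt is 0; find feasible point with positive objective
      subst hpeq
      have hobjopt : obj Wsopt psopt = 0 := by
        rw [hobj]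
        simp only [sub_self, zero_mul, zero_div, add_zero, Real.logb_one, mul_zero]
      -- continuity: find ps' < psopt with ε (ps'*hs/(U*N0)) > εbar
      have hf : Continuous (fun p : ℝ => ε (p * hs / (U * N0))) := by
        exact hcont.comp ((continuous_id.mul continuous_const).div_const (U * N0))
      obtain ⟨δ, hδ, hball⟩ := Metric.continuous_iff.mp hf psopt
        (ε (psopt * hs / (U * N0)) - εbar) (by linarith)
      set ps' : ℝ := max (psopt - δ / 2) 0 with hps'def
      have hps'0 : 0 ≤ ps' := le_max_right _ _
      have hps'lt : ps' < psopt := by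
        apply max_lt (by linarith) hP
      have hdist : dist ps' psopt < δ := by
        rw [Real.dist_eq, abs_lt]
        constructor
        · have : psopt - δ / 2 ≤ ps' := le_max_left _ _
          linarith
        · linarith
      have hεps' : εbar < ε (ps' * hs / (U * N0)) := by
        have := hball ps' hdist
        rw [Real.dist_eq, abs_lt] at this
        linarith [this.1]
      have hfU : feasible U ps' := hfeasU ps' hps'0 (le_of_lt hps'lt) (le_of_lt hεps')
      have hle2 := hmax U ps' hfU
      rw [hobjopt, hobj] at hle2
      have hpos : 0 < (W - U) * Real.logb 2 (1 + (psopt - ps') * hb / ((W - U) * N0)) := by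
        apply mul_pos (by linarith)
        apply Real.logb_pos one_lt_two
        have h0 : 0 < psopt - ps' := by linarith
        have : 0 < (psopt - ps') * hb / ((W - U) * N0) :=
          div_pos (mul_pos h0 hhb) (mul_pos (by linarith) hN0)
        linarith
      linarith
end

section
/- The water-filling solution is optimal: for W₁, W₂, h₁, h₂ > 0 and R̄ > 0, the pair (p̃₁, p̃₂) with p̃ᵢ = λ·Wᵢ - 1/hᵢ and λ = 2^{R̄/(W₁+W₂)}/((W₁h₁)^{W₁/(W₁+W₂)}(W₂h₂)^{W₂/(W₁+W₂)}), when both components are nonnegative, minimizes p₁ + p₂ among all p₁, p₂ ≥ 0 satisfying W₁·log₂(1 + h₁·p₁) + W₂·log₂(1 + h₂·p₂) ≥ R̄. -/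
lemma log_tangent {x y : ℝ} (hx : 0 < x) (hy : 0 < y) :
    Real.log x - Real.log y ≤ (x - y) / y := by
  have h1 : Real.log (x / y) ≤ x / y - 1 :=
    Real.log_le_sub_one_of_pos (div_pos hx hy)
  rw [Real.log_div hx.ne' hy.ne'] at h1
  have : x / y - 1 = (x - y) / y := by field_simp
  linarith [this ▸ h1]

theorem waterfilling_optimal (W1 W2 h1 h2 Rbar : ℝ)
    (hW1 : 0 < W1) (hW2 : 0 < W2) (hh1 : 0 < h1) (hh2 : 0 < h2) (hR : 0 < Rbar)
    (lam q1 q2 : ℝ)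
    (hlam : lam = (2 : ℝ) ^ (Rbar / (W1 + W2)) /
      ((W1 * h1) ^ (W1 / (W1 + W2)) * (W2 * h2) ^ (W2 / (W1 + W2))))
    (hq1 : q1 = lam * W1 - 1 / h1) (hq2 : q2 = lam * W2 - 1 / h2)
    (hq1n : 0 ≤ q1) (hq2n : 0 ≤ q2) :
    ∀ p1 p2 : ℝ, 0 ≤ p1 → 0 ≤ p2 →
      W1 * Real.logb 2 (1 + h1 * p1) + W2 * Real.logb 2 (1 + h2 * p2) ≥ Rbar →
      q1 + q2 ≤ p1 + p2 := by
  intro p1 p2 hp1 hp2 hfeas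
  have hs : 0 < W1 + W2 := by linarith
  have hA : (0:ℝ) < (W1 * h1) ^ (W1 / (W1 + W2)) :=
    Real.rpow_pos_of_pos (by positivity) _
  have hB : (0:ℝ) < (W2 * h2) ^ (W2 / (W1 + W2)) :=
    Real.rpow_pos_of_pos (by positivity) _
  have hlampos : 0 < lam := by
    rw [hlam]
    have : (0:ℝ) < (2:ℝ) ^ (Rbar / (W1 + W2)) := Real.rpow_pos_of_pos two_pos _
    positivity
  have hL : (0:ℝ) < Real.log 2 := Real.log_pos one_lt_two
  -- log lam
  have hloglam : Real.log lam = (Rbar / (W1 + W2)) * Real.log 2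
      - (W1 / (W1 + W2)) * Real.log (W1 * h1)
      - (W2 / (W1 + W2)) * Real.log (W2 * h2) := by
    rw [hlam, Real.log_div (Real.rpow_pos_of_pos two_pos _).ne' (by positivity),
      Real.log_mul hA.ne' hB.ne', Real.log_rpow two_pos,
      Real.log_rpow (by positivity), Real.log_rpow (by positivity)]
    ring
  set y1 := h1 * lam * W1 with hy1def
  set y2 := h2 * lam * W2 with hy2def
  have hy1 : 0 < y1 := by positivity
  have hy2 : 0 < y2 := by positivity
  -- equality at waterfilling point
  have heq : W1 * Real.log y1 + W2 * Real.log y2 = Rbar * Real.log 2 := by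
    rw [hy1def, hy2def, Real.log_mul (by positivity) hW1.ne',
      Real.log_mul hh1.ne' hlampos.ne',
      Real.log_mul (by positivity) hW2.ne',
      Real.log_mul hh2.ne' hlampos.ne', hloglam,
      Real.log_mul hW1.ne' hh1.ne', Real.log_mul hW2.ne' hh2.ne']
    field_simp
    ring
  have hx1 : (0:ℝ) < 1 + h1 * p1 := by positivity
  have hx2 : (0:ℝ) < 1 + h2 * p2 := by positivity
  -- constraint in log form
  have hfeas' : Rbar * Real.log 2 ≤ W1 * Real.log (1 + h1 * p1) + W2 * Real.log (1 + h2 * p2) := by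
    have := hfeas
    rw [Real.logb, Real.logb] at this
    rw [ge_iff_le, ← sub_nonneg] at this
    have h2' : 0 ≤ (W1 * Real.log (1 + h1 * p1) + W2 * Real.log (1 + h2 * p2)
        - Rbar * Real.log 2) / Real.log 2 := by
      have heq2 : (W1 * Real.log (1 + h1 * p1) + W2 * Real.log (1 + h2 * p2)
          - Rbar * Real.log 2) / Real.log 2
          = W1 * (Real.log (1 + h1 * p1) / Real.log 2)
            + W2 * (Real.log (1 + h2 * p2) / Real.log 2) - Rbar := by
        field_simp
      rw [heq2]; linarith
    have := (div_nonneg_iff.mp h2')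
    rcases this with ⟨h, _⟩ | ⟨_, h⟩
    · linarith
    · linarith
  -- tangent bounds
  have ht1 : Real.log (1 + h1 * p1) - Real.log y1 ≤ ((1 + h1 * p1) - y1) / y1 :=
    log_tangent hx1 hy1
  have ht2 : Real.log (1 + h2 * p2) - Real.log y2 ≤ ((1 + h2 * p2) - y2) / y2 :=
    log_tangent hx2 hy2
  have hy1q : y1 = 1 + h1 * q1 := by
    rw [hq1]; field_simp [hy1def]; ring
  have hy2q : y2 = 1 + h2 * q2 := by
    rw [hq2]; field_simp [hy2def]; ring
  have hb1 : W1 * (((1 + h1 * p1) - y1) / y1) = (p1 - q1) / lam := by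
    rw [hy1q]
    have : 1 + h1 * p1 - (1 + h1 * q1) = h1 * (p1 - q1) := by ring
    rw [this, ← hy1q, hy1def]
    field_simp
  have hb2 : W2 * (((1 + h2 * p2) - y2) / y2) = (p2 - q2) / lam := by
    rw [hy2q]
    have : 1 + h2 * p2 - (1 + h2 * q2) = h2 * (p2 - q2) := by ring
    rw [this, ← hy2q, hy2def]
    field_simp
  have key : 0 ≤ (p1 - q1) / lam + (p2 - q2) / lam := by
    have e1 : W1 * (Real.log (1 + h1 * p1) - Real.log y1) ≤ (p1 - q1) / lam := by
      rw [← hb1]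
      exact mul_le_mul_of_nonneg_left ht1 hW1.le
    have e2 : W2 * (Real.log (1 + h2 * p2) - Real.log y2) ≤ (p2 - q2) / lam := by
      rw [← hb2]
      exact mul_le_mul_of_nonneg_left ht2 hW2.le
    nlinarith [e1, e2, hfeas', heq]
  have : 0 ≤ (p1 - q1 + (p2 - q2)) / lam := by
    rw [add_div]; exact key
  have := (div_nonneg_iff.mp this)
  rcases this with ⟨h, _⟩ | ⟨_, h⟩
  · linarith
  · linarith
end

section
/- The minimum NOMA transmit power P_min^N(S̄, ε̄, R̄) = p_s* + ((p_s*·g + W·N₀)/g)·(2^{R̄/W} - 1), where p_s* is the minimal power satisfying the semantic constraints, is the optimal value of the problem: minimize p_s + p_b subject to p_s ≥ p_s*, p_b ≥ 0, and W·log₂(1 + p_b·g/(p_s·g + W·N₀)) ≥ R̄. -/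
theorem noma_min_power (W N0 g Rbar pss : ℝ)
    (hW : 0 < W) (hN0 : 0 < N0) (hg : 0 < g) (hR : 0 < Rbar) (hpss : 0 ≤ pss) :
    IsLeast {t : ℝ | ∃ ps pb : ℝ, pss ≤ ps ∧ 0 ≤ pb ∧
        W * Real.logb 2 (1 + pb * g / (ps * g + W * N0)) ≥ Rbar ∧ t = ps + pb}
      (pss + (pss * g + W * N0) / g * ((2 : ℝ) ^ (Rbar / W) - 1)) := by
  have hD : 0 < pss * g + W * N0 := by positivity
  have hone : (1:ℝ) < (2:ℝ) ^ (Rbar / W) := by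
    rw [show (1:ℝ) = (2:ℝ) ^ (0:ℝ) by simp]
    exact Real.rpow_lt_rpow_left_iff (by norm_num) |>.mpr (by positivity)
  have hcpos : 0 < (2:ℝ) ^ (Rbar / W) - 1 := by linarith
  constructor
  · refine ⟨pss, (pss * g + W * N0) / g * ((2:ℝ) ^ (Rbar / W) - 1), le_refl _, ?_, ?_, rfl⟩
    · positivity
    · have h1 : 1 + (pss * g + W * N0) / g * ((2:ℝ) ^ (Rbar / W) - 1) * g /
          (pss * g + W * N0) = (2:ℝ) ^ (Rbar / W) := by
        field_simp
        ring
      rw [h1, Real.logb_rpow (by norm_num) (by norm_num),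
        mul_div_cancel₀ _ (ne_of_gt hW)]
  · rintro t ⟨ps, pb, h1, h2, h3, rfl⟩
    have hD' : 0 < ps * g + W * N0 := by
      have := mul_nonneg (hpss.trans h1) hg.le
      nlinarith [mul_pos hW hN0]
    have hx : 0 < 1 + pb * g / (ps * g + W * N0) := by
      have := div_nonneg (mul_nonneg h2 hg.le) hD'.le
      linarith
    have hlog : Rbar / W ≤ Real.logb 2 (1 + pb * g / (ps * g + W * N0)) := by
      rw [div_le_iff₀ hW] at *
      linarith [h3]
    have hxe : (2:ℝ) ^ (Rbar / W) ≤ 1 + pb * g / (ps * g + W * N0) :=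
      (Real.le_logb_iff_rpow_le (by norm_num) hx).mp hlog
    have hpb : ((2:ℝ) ^ (Rbar / W) - 1) * (ps * g + W * N0) ≤ pb * g := by
      have h4 : (2:ℝ) ^ (Rbar / W) - 1 ≤ pb * g / (ps * g + W * N0) := by linarith
      exact (le_div_iff₀ hD').mp h4
    have key : (pss * g + W * N0) / g * ((2:ℝ) ^ (Rbar / W) - 1) * g ≤ pb * g := by
      have : (pss * g + W * N0) ≤ ps * g + W * N0 := by nlinarith
      have h2' : ((2:ℝ) ^ (Rbar / W) - 1) * (pss * g + W * N0) ≤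
          ((2:ℝ) ^ (Rbar / W) - 1) * (ps * g + W * N0) := by nlinarith
      calc (pss * g + W * N0) / g * ((2:ℝ) ^ (Rbar / W) - 1) * g
          = ((2:ℝ) ^ (Rbar / W) - 1) * (pss * g + W * N0) := by field_simp
        _ ≤ pb * g := le_trans h2' hpb
    have := (mul_le_mul_iff_of_pos_right hg).mp key
    linarith
end
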